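/- arXiv:1807.11194 — 3 statements merged into one kernel-verified Lean document; each statement's English description precedes it below -/
import Mathlib

section
/- For every a ∈ I, the family (Ω_a)_{a∈I} with Ω_a := ∏_{α∈Φ⁺} (1 − e^{−α})^{−[α]_a} ∈ K satisfies the relation (1 − e^{α_a})(1 − e^{−α_a}) · Ω_a · s_a(Ω_a) = ∏_{b : C_{ab} < 0} (Ω_b)^{−C_{ab}}, an identity in the field K. -/
/-- `ℤ[Q]` (here realized inside the group algebra `ℤ[V]` of the ambient vector space)
is an integral domain. -/
instance addMonoidAlgebraIsDomain
    {V : Type*} [AddCommGroup V] [Module ℚ V] : IsDomain (AddMonoidAlgebra ℤ V) :=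
  NoZeroDivisors.to_isDomain _

/-- The exponential `e^v`, viewed in the fraction field `K` of the group algebra. -/
noncomputable def expK {V : Type*} [AddCommGroup V] [Module ℚ V] (v : V) :
    FractionRing (AddMonoidAlgebra ℤ V) :=
  algebraMap (AddMonoidAlgebra ℤ V) _ (AddMonoidAlgebra.single v 1)

/-- The field automorphism of `K` induced by an additive automorphism `e` of `V`
via `e^v ↦ e^{e(v)}`; this is how the Weyl group acts on `K`. -/
noncomputable def weylAutK {V : Type*} [AddCommGroup V] [Module ℚ V] (e : V ≃+ V) :
    FractionRing (AddMonoidAlgebra ℤ V) ≃+* FractionRing (AddMonoidAlgebra ℤ V) :=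
  IsFractionRing.ringEquivOfRingEquiv (AddMonoidAlgebra.domCongr ℤ ℤ e).toRingEquiv

section MYaux

variable {V : Type*} [AddCommGroup V] [Module ℚ V]

lemma expK_add (v w : V) : expK (v + w) = expK v * expK w := by
  unfold expK
  rw [← map_mul, AddMonoidAlgebra.single_mul_single, one_mul]

lemma expK_zero : expK (0 : V) = 1 := by
  unfold expK
  rw [← AddMonoidAlgebra.one_def, map_one]

lemma expK_ne_zero (v : V) : expK v ≠ 0 := by
  intro h
  have : expK v * expK (-v) = 1 := by rw [← expK_add, add_neg_cancel, expK_zero]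
  rw [h, zero_mul] at this
  exact one_ne_zero this.symm

lemma one_sub_expK_ne_zero {v : V} (hv : v ≠ 0) :
    (1 : FractionRing (AddMonoidAlgebra ℤ V)) - expK v ≠ 0 := by
  rw [sub_ne_zero]
  intro h
  have h1 : algebraMap (AddMonoidAlgebra ℤ V) (FractionRing (AddMonoidAlgebra ℤ V))
      (AddMonoidAlgebra.single (0 : V) (1 : ℤ)) =
      algebraMap (AddMonoidAlgebra ℤ V) (FractionRing (AddMonoidAlgebra ℤ V))
      (AddMonoidAlgebra.single v (1 : ℤ)) := by
    rw [← AddMonoidAlgebra.one_def, map_one]; exact h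
  have h2 := IsFractionRing.injective (AddMonoidAlgebra ℤ V)
      (FractionRing (AddMonoidAlgebra ℤ V)) h1
  rcases AddMonoidAlgebra.single_inj.1 h2 with ⟨h3, _⟩ | ⟨h3, _⟩
  · exact hv h3.symm
  · exact one_ne_zero h3

lemma weylAutK_expK (e : V ≃+ V) (v : V) : weylAutK e (expK v) = expK (e v) := by
  unfold weylAutK expK
  rw [IsFractionRing.ringEquivOfRingEquiv_algebraMap]
  congr 1
  simp [AddMonoidAlgebra.domCongr_single]

lemma zpow_sum_aux {K : Type*} [Field K] {x : K} (hx : x ≠ 0) {ι : Type*}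
    (s : Finset ι) (f : ι → ℤ) : x ^ (∑ i ∈ s, f i) = ∏ i ∈ s, x ^ f i := by
  classical
  induction s using Finset.induction_on with
  | empty => simp
  | insert _ _ h ih => rw [Finset.sum_insert h, Finset.prod_insert h, zpow_add₀ hx, ih]

end MYaux

/-!
STATEMENT 1.  For a root system `Φ` with positive roots `Φpos`, simple roots `sroot`,
coroot pairing `cpair`, Cartan matrix `C`, simple reflections `s a`, and root coefficients
`coeff`, the family `Ω a = ∏_{α ∈ Φ⁺} (1 - e^{-α})^{-[α]_a}` in the fraction field `K` of
`ℤ[Q]` satisfies, for every `a ∈ I`,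
`(1 - e^{α_a}) (1 - e^{-α_a}) ⬝ Ω_a ⬝ s_a(Ω_a) = ∏_{b : C a b < 0} Ω_b ^ (-C a b)`.
-/
set_option synthInstance.maxHeartbeats 1000000 in
set_option maxHeartbeats 1000000 in
theorem MY_limit_product_satisfies_QQtilde_relation
    {I V : Type*} [Fintype I] [DecidableEq I]
    [AddCommGroup V] [Module ℚ V] [FiniteDimensional ℚ V]
    (Φ Φpos : Finset V) (sroot : I → V) (cpair : I → V →ₗ[ℚ] ℚ)
    (coeff : V → I → ℤ) (C : I → I → ℤ) (s : I → V ≃ₗ[ℚ] V)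
    -- axioms of a reduced crystallographic root system with base:
    (hindep : LinearIndependent ℚ sroot)
    (hspan : Submodule.span ℚ (Set.range sroot) = ⊤)
    (hC : ∀ a b, (C a b : ℚ) = cpair a (sroot b))
    (hCdiag : ∀ a, C a a = 2)
    (hCoff : ∀ a b, a ≠ b → C a b ≤ 0)
    (hs : ∀ a v, s a v = v - cpair a v • sroot a)
    (hsimple : ∀ a, sroot a ∈ Φpos)
    (hpossub : Φpos ⊆ Φ)
    (hzero : (0 : V) ∉ Φ)
    (hsymm : ∀ β ∈ Φ, -β ∈ Φ)
    (hsign : ∀ β ∈ Φ, β ∈ Φpos ∨ -β ∈ Φpos)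
    (hcoeff : ∀ β ∈ Φ, β = ∑ b, coeff β b • sroot b)
    (hnonneg : ∀ β ∈ Φpos, ∀ b, 0 ≤ coeff β b)
    (hred : ∀ β ∈ Φ, ∀ t : ℚ, t • β ∈ Φ → t = 1 ∨ t = -1)
    (hsΦ : ∀ a, ∀ β ∈ Φ, s a β ∈ Φ)
    -- the family `Ω a = ∏_{α ∈ Φ⁺} (1 - e^{-α})^{-[α]_a}` in `K`:
    (Ω : I → FractionRing (AddMonoidAlgebra ℤ V))
    (hΩ : ∀ a, Ω a = ∏ α ∈ Φpos, (1 - expK (-α)) ^ (-(coeff α a)))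
    (a : I) :
    (1 - expK (sroot a)) * (1 - expK (-(sroot a))) * Ω a
        * weylAutK (s a).toAddEquiv (Ω a)
      = ∏ b ∈ Finset.univ.filter (fun b => C a b < 0), Ω b ^ (-(C a b)) := by
  classical
  -- coefficient uniqueness
  have hliQ : ∀ g : I → ℚ, ∑ b, g b • sroot b = 0 → ∀ b, g b = 0 :=
    Fintype.linearIndependent_iff.1 hindep
  have huniq : ∀ (c d : I → ℤ), (∑ b, c b • sroot b) = (∑ b, d b • sroot b) →
      ∀ b, c b = d b := by
    intro c d h b
    have h0 : ∑ b, (((c b : ℚ) - (d b : ℚ))) • sroot b = 0 := by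
      simp only [sub_smul, Finset.sum_sub_distrib, Int.cast_smul_eq_zsmul]
      rw [h, sub_self]
    have := hliQ _ h0 b
    have := sub_eq_zero.1 this
    exact_mod_cast this
  have hcoeff_eq : ∀ β ∈ Φ, ∀ d : I → ℤ, β = ∑ b, d b • sroot b →
      ∀ b, coeff β b = d b := fun β hβ d hd =>
    huniq _ _ (by rw [← hcoeff β hβ, ← hd])
  have hne0 : ∀ β ∈ Φ, β ≠ 0 := fun β hβ h0 => hzero (h0 ▸ hβ)
  have hnegcoeff : ∀ β ∈ Φ, ∀ b, coeff (-β) b = - coeff β b := by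
    intro β hβ b
    refine hcoeff_eq (-β) (hsymm β hβ) (fun b => - coeff β b) ?_ b
    rw [show (∑ b, (- coeff β b) • sroot b) = - ∑ b, coeff β b • sroot b by
      simp [neg_smul, Finset.sum_neg_distrib], ← hcoeff β hβ]
  have hnotboth : ∀ β ∈ Φpos, -β ∉ Φpos := by
    intro β hβ hnβ
    have hβΦ := hpossub hβ
    have h3 : ∀ b, coeff β b = 0 := by
      intro b
      have h1 := hnonneg β hβ b
      have h2 := hnonneg _ hnβ b
      rw [hnegcoeff β hβΦ b] at h2
      omega
    exact hne0 β hβΦ (by rw [hcoeff β hβΦ]; simp [h3])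
  have hsimple_coeff : ∀ b c, coeff (sroot b) c = if c = b then 1 else 0 := by
    intro b c
    refine hcoeff_eq (sroot b) (hpossub (hsimple b)) (fun c => if c = b then 1 else 0) ?_ c
    simp
  have hcpa2 : cpair a (sroot a) = 2 := by
    rw [← hC a a, hCdiag]; norm_num
  set N : V → ℤ := fun β => ∑ b, coeff β b * C a b with hNdef
  have hN : ∀ β ∈ Φ, ((N β : ℚ)) = cpair a β := by
    intro β hβ
    conv_rhs => rw [hcoeff β hβ]
    rw [map_sum]
    push_cast [hNdef]
    refine Finset.sum_congr rfl fun b _ => ?_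
    rw [map_zsmul, zsmul_eq_mul, ← hC]
  have hs_coeff : ∀ β ∈ Φ, ∀ b, coeff (s a β) b =
      if b = a then coeff β a - N β else coeff β b := by
    intro β hβ b
    refine hcoeff_eq (s a β) (hsΦ a β hβ) (fun b => if b = a then coeff β a - N β else coeff β b) ?_ b
    have hterm : ∀ c, (if c = a then coeff β a - N β else coeff β c) • sroot c
        = coeff β c • sroot c - (if c = a then (N β) • sroot a else 0) := by
      intro c
      by_cases hc : c = a
      · subst hc; simp [sub_smul]
      · simp [hc]
    calc s a β = β - (N β) • sroot a := by
          rw [hs a β, ← hN β hβ, Int.cast_smul_eq_zsmul]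
      _ = (∑ c, coeff β c • sroot c) - (N β) • sroot a := by rw [← hcoeff β hβ]
      _ = ∑ c, (if c = a then coeff β a - N β else coeff β c) • sroot c := by
          simp only [hterm, Finset.sum_sub_distrib, Finset.sum_ite_eq',
            Finset.mem_univ, if_true]
  have hinv : ∀ v, s a (s a v) = v := by
    intro v
    rw [hs a (s a v), hs a v, map_sub, map_smul, hcpa2, smul_eq_mul]
    have h2 : cpair a v - cpair a v * 2 = -(cpair a v) := by ring
    rw [h2, neg_smul]
    abel
  have hsaa : s a (sroot a) = - sroot a := by
    rw [hs a (sroot a), hcpa2]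
    rw [show (2 : ℚ) • sroot a = sroot a + sroot a by rw [two_smul]]
    abel
  have hmain : ∀ β ∈ Φpos.erase (sroot a), s a β ∈ Φpos.erase (sroot a) := by
    intro β hβ
    obtain ⟨hβne, hβpos⟩ := Finset.mem_erase.1 hβ
    have hβΦ := hpossub hβpos
    have hsβΦ := hsΦ a β hβΦ
    have hb : ∃ b, b ≠ a ∧ coeff β b ≠ 0 := by
      by_contra h
      push_neg at h
      have hβeq : β = (coeff β a : ℚ) • sroot a := by
        conv_lhs => rw [hcoeff β hβΦ]
        rw [Finset.sum_eq_single a (fun b _ hb => by rw [h b hb]; simp) (by simp),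
          Int.cast_smul_eq_zsmul]
      rcases hred (sroot a) (hpossub (hsimple a)) (coeff β a) (by rw [← hβeq]; exact hβΦ)
        with h1 | h1
      · exact hβne (by rw [hβeq, h1, one_smul])
      · refine hnotboth β hβpos ?_
        have : β = - sroot a := by rw [hβeq, h1]; simp
        rw [this, neg_neg]
        exact hsimple a
    obtain ⟨b, hba, hb0⟩ := hb
    have hbpos : 0 < coeff β b := lt_of_le_of_ne (hnonneg β hβpos b) (Ne.symm hb0)
    have hpos : s a β ∈ Φpos := by
      rcases hsign _ hsβΦ with h | h
      · exact h
      · exfalso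
        have h2 := hnonneg _ h b
        rw [hnegcoeff _ hsβΦ b, hs_coeff β hβΦ b, if_neg hba] at h2
        omega
    refine Finset.mem_erase.2 ⟨?_, hpos⟩
    intro heq
    have hβval : β = s a (sroot a) := by rw [← heq, hinv]
    rw [hsaa] at hβval
    exact hnotboth (sroot a) (hsimple a) (by rw [← hβval]; exact hβpos)
  -- nonvanishing
  have hxne : ∀ β ∈ Φ, (1 - expK (-β) : FractionRing (AddMonoidAlgebra ℤ V)) ≠ 0 :=
    fun β hβ => one_sub_expK_ne_zero (neg_ne_zero.2 (hne0 β hβ))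
  have hAne : (1 - expK (sroot a) : FractionRing (AddMonoidAlgebra ℤ V)) ≠ 0 :=
    one_sub_expK_ne_zero (hne0 _ (hpossub (hsimple a)))
  have hBne : (1 - expK (-(sroot a)) : FractionRing (AddMonoidAlgebra ℤ V)) ≠ 0 :=
    hxne _ (hpossub (hsimple a))
  set E : V → ℤ := fun β => ∑ b ∈ Finset.univ.filter (fun b => C a b < 0),
    coeff β b * C a b with hE
  -- RHS
  have hRHS : (∏ b ∈ Finset.univ.filter (fun b => C a b < 0), Ω b ^ (-(C a b)))
      = ∏ β ∈ Φpos.erase (sroot a), (1 - expK (-β)) ^ E β := by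
    have h1 : ∀ b ∈ Finset.univ.filter (fun b => C a b < 0),
        Ω b ^ (-(C a b)) = ∏ α ∈ Φpos, (1 - expK (-α)) ^ (coeff α b * C a b) := by
      intro b _
      rw [hΩ b, ← Finset.prod_zpow]
      refine Finset.prod_congr rfl fun α hα => ?_
      rw [← zpow_mul]
      congr 1
      ring
    rw [Finset.prod_congr rfl h1, Finset.prod_comm]
    have h2 : ∀ α ∈ Φpos, (∏ b ∈ Finset.univ.filter (fun b => C a b < 0),
        (1 - expK (-α)) ^ (coeff α b * C a b)) = (1 - expK (-α)) ^ E α :=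
      fun α hα => (zpow_sum_aux (hxne α (hpossub hα)) _ _).symm
    rw [Finset.prod_congr rfl h2]
    refine (Finset.prod_erase _ ?_).symm
    have hEa : E (sroot a) = 0 := by
      show (∑ b ∈ Finset.univ.filter (fun b => C a b < 0), coeff (sroot a) b * C a b) = 0
      have h3 : ∀ b, coeff (sroot a) b * C a b = if b = a then C a b else 0 := by
        intro b; rw [hsimple_coeff]; split <;> simp
      rw [Finset.sum_congr rfl fun b _ => h3 b, Finset.sum_ite_eq']
      simp [hCdiag]
    rw [hEa, zpow_zero]
  -- Ω a decomposition
  have hΩa : Ω a = (1 - expK (-(sroot a))) ^ (-1 : ℤ)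
      * ∏ β ∈ Φpos.erase (sroot a), (1 - expK (-β)) ^ (-(coeff β a)) := by
    rw [hΩ a, ← Finset.mul_prod_erase Φpos _ (hsimple a), hsimple_coeff a a, if_pos rfl]
  -- σ(Ω a) decomposition
  have hσΩa : weylAutK (s a).toAddEquiv (Ω a) = (1 - expK (sroot a)) ^ (-1 : ℤ)
      * ∏ β ∈ Φpos.erase (sroot a), (1 - expK (-β)) ^ (-(coeff (s a β) a)) := by
    rw [hΩ a, map_prod]
    have hterm : ∀ α ∈ Φpos, weylAutK (s a).toAddEquiv ((1 - expK (-α)) ^ (-(coeff α a)))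
        = (1 - expK (-(s a α))) ^ (-(coeff α a)) := by
      intro α _
      rw [map_zpow₀, map_sub, map_one, weylAutK_expK]
      have h4 : ((s a).toAddEquiv) (-α) = -(s a α) := by
        rw [LinearEquiv.coe_toAddEquiv, map_neg]
        rfl
      rw [h4]
    rw [Finset.prod_congr rfl hterm, ← Finset.mul_prod_erase Φpos _ (hsimple a), hsaa,
      neg_neg, hsimple_coeff a a, if_pos rfl]
    congr 1
    refine Finset.prod_nbij' (fun α => s a α) (fun β => s a β) hmain hmain
      (fun α _ => hinv α) (fun β _ => hinv β) ?_
    intro α hα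
    rw [hinv α]
  -- combine
  rw [hσΩa, hΩa, hRHS]
  have hP : (∏ β ∈ Φpos.erase (sroot a), (1 - expK (-β)) ^ (-(coeff β a)))
      * (∏ β ∈ Φpos.erase (sroot a), (1 - expK (-β)) ^ (-(coeff (s a β) a)))
      = ∏ β ∈ Φpos.erase (sroot a), (1 - expK (-β)) ^ E β := by
    rw [← Finset.prod_mul_distrib]
    refine Finset.prod_congr rfl fun β hβ => ?_
    have hβpos := (Finset.mem_erase.1 hβ).2
    have hβΦ := hpossub hβpos
    rw [← zpow_add₀ (hxne β hβΦ)]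
    congr 1
    rw [hs_coeff β hβΦ a, if_pos rfl]
    have hsub : E β = ∑ b ∈ Finset.univ.erase a, coeff β b * C a b := by
      show (∑ b ∈ Finset.univ.filter (fun b => C a b < 0), coeff β b * C a b) = _
      refine Finset.sum_subset ?_ ?_
      · intro b hb
        rw [Finset.mem_filter] at hb
        refine Finset.mem_erase.2 ⟨?_, Finset.mem_univ b⟩
        intro hba
        rw [hba, hCdiag] at hb
        omega
      · intro b hb1 hb2
        rw [Finset.mem_filter, not_and] at hb2
        have h5 : ¬ C a b < 0 := hb2 (Finset.mem_univ b)
        have h6 : b ≠ a := (Finset.mem_erase.1 hb1).1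
        have := hCoff a b (Ne.symm h6)
        have : C a b = 0 := by omega
        rw [this, mul_zero]
    have hNsplit : N β = coeff β a * C a a + ∑ b ∈ Finset.univ.erase a, coeff β b * C a b :=
      (Finset.add_sum_erase _ _ (Finset.mem_univ a)).symm
    rw [hCdiag] at hNsplit
    rw [hsub, hNsplit]
    ring
  calc (1 - expK (sroot a)) * (1 - expK (-(sroot a)))
        * ((1 - expK (-(sroot a))) ^ (-1 : ℤ)
          * ∏ β ∈ Φpos.erase (sroot a), (1 - expK (-β)) ^ (-(coeff β a)))
        * ((1 - expK (sroot a)) ^ (-1 : ℤ)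
          * ∏ β ∈ Φpos.erase (sroot a), (1 - expK (-β)) ^ (-(coeff (s a β) a)))
      = ((1 - expK (sroot a)) * (1 - expK (sroot a)) ^ (-1 : ℤ))
        * ((1 - expK (-(sroot a))) * (1 - expK (-(sroot a))) ^ (-1 : ℤ))
        * ((∏ β ∈ Φpos.erase (sroot a), (1 - expK (-β)) ^ (-(coeff β a)))
          * ∏ β ∈ Φpos.erase (sroot a), (1 - expK (-β)) ^ (-(coeff (s a β) a))) := by
        ring
    _ = ∏ β ∈ Φpos.erase (sroot a), (1 - expK (-β)) ^ E β := by
        rw [zpow_neg_one, zpow_neg_one, mul_inv_cancel₀ hAne, mul_inv_cancel₀ hBne,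
          one_mul, one_mul, hP]
end

section
/- For every a ∈ I the following identity holds in the group algebra ℤ[Q]: ∏_{α∈Φ⁺} (1 − e^{−α})^{[α]_a} · ∏_{α∈Φ⁺} (1 − e^{−s_a(α)})^{[α]_a} = (1 − e^{α_a})(1 − e^{−α_a}) · ∏_{α∈Φ⁺} (1 − e^{−α})^{m_a(α)}, where m_a(α) := −∑_{b : C_{ab} < 0} C_{ab}·[α]_b (a nonnegative integer for α ∈ Φ⁺). -/
/-- The exponential `e^v` in the group algebra `ℤ[V]` (the group algebra `ℤ[Q]` of the
root lattice, realized inside the group algebra of the ambient vector space). -/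
noncomputable def expZ {V : Type*} [AddCommGroup V] (v : V) : AddMonoidAlgebra ℤ V :=
  AddMonoidAlgebra.single v 1

/-!
STATEMENT 2.  For a root system `Φ` with positive roots `Φpos`, simple roots `sroot`,
coroot pairing `cpair`, Cartan matrix `C`, simple reflections `s a`, and root coefficients
`coeff` (with `coeff α b ≥ 0` for positive roots `α`), one has in `ℤ[Q]`, for every `a`:
`∏_{α∈Φ⁺}(1-e^{-α})^{[α]_a} ⬝ ∏_{α∈Φ⁺}(1-e^{-s_a(α)})^{[α]_a}
   = (1-e^{α_a})(1-e^{-α_a}) ⬝ ∏_{α∈Φ⁺}(1-e^{-α})^{m_a(α)}`,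
where `m_a(α) = -∑_{b : C a b < 0} C a b * [α]_b` (a nonnegative integer for `α ∈ Φ⁺`,
recorded here via the data `m : I → V → ℕ`).
-/
theorem MY_denominator_type_identity_in_group_algebra
    {I V : Type*} [Fintype I] [DecidableEq I]
    [AddCommGroup V] [Module ℚ V] [FiniteDimensional ℚ V]
    (Φ Φpos : Finset V) (sroot : I → V) (cpair : I → V →ₗ[ℚ] ℚ)
    (coeff : V → I → ℤ) (C : I → I → ℤ) (s : I → V ≃ₗ[ℚ] V)
    -- axioms of a reduced crystallographic root system with base:
    (hindep : LinearIndependent ℚ sroot)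
    (hspan : Submodule.span ℚ (Set.range sroot) = ⊤)
    (hC : ∀ a b, (C a b : ℚ) = cpair a (sroot b))
    (hCdiag : ∀ a, C a a = 2)
    (hCoff : ∀ a b, a ≠ b → C a b ≤ 0)
    (hs : ∀ a v, s a v = v - cpair a v • sroot a)
    (hsimple : ∀ a, sroot a ∈ Φpos)
    (hpossub : Φpos ⊆ Φ)
    (hzero : (0 : V) ∉ Φ)
    (hsymm : ∀ β ∈ Φ, -β ∈ Φ)
    (hsign : ∀ β ∈ Φ, β ∈ Φpos ∨ -β ∈ Φpos)
    (hcoeff : ∀ β ∈ Φ, β = ∑ b, coeff β b • sroot b)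
    (hnonneg : ∀ β ∈ Φpos, ∀ b, 0 ≤ coeff β b)
    (hred : ∀ β ∈ Φ, ∀ t : ℚ, t • β ∈ Φ → t = 1 ∨ t = -1)
    (hsΦ : ∀ a, ∀ β ∈ Φ, s a β ∈ Φ)
    -- the exponents `m_a(α) = -∑_{b : C a b < 0} C a b * [α]_b`, nonnegative integers:
    (m : I → V → ℕ)
    (hm : ∀ a, ∀ α ∈ Φpos, (m a α : ℤ)
        = -∑ b ∈ Finset.univ.filter (fun b => C a b < 0), C a b * coeff α b)
    (a : I) :
    (∏ α ∈ Φpos, (1 - expZ (-α)) ^ (coeff α a).toNat)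
        * ∏ α ∈ Φpos, (1 - expZ (-(s a α))) ^ (coeff α a).toNat
      = (1 - expZ (sroot a)) * (1 - expZ (-(sroot a)))
        * ∏ α ∈ Φpos, (1 - expZ (-α)) ^ (m a α) := by

  classical
  -- uniqueness of rational coefficients w.r.t. the simple roots
  have huniq : ∀ f g : I → ℚ, ∑ b, f b • sroot b = ∑ b, g b • sroot b → ∀ b, f b = g b := by
    intro f g h b
    have h0 : ∑ c, (f c - g c) • sroot c = 0 := by
      simp only [sub_smul, Finset.sum_sub_distrib, h, sub_self]
    have := Fintype.linearIndependent_iff.mp hindep (fun c => f c - g c) h0 b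
    linarith
  -- rational representation of roots
  have hrep : ∀ β ∈ Φ, β = ∑ b, ((coeff β b : ℚ)) • sroot b := by
    intro β hβ
    conv_lhs => rw [hcoeff β hβ]
    refine Finset.sum_congr rfl fun b _ => ?_
    rw [Int.cast_smul_eq_zsmul]
  -- pairing formula
  have hcp : ∀ β ∈ Φ, cpair a β = ∑ b, (C a b : ℚ) * (coeff β b : ℚ) := by
    intro β hβ
    conv_lhs => rw [hrep β hβ]
    rw [map_sum]
    refine Finset.sum_congr rfl fun b _ => ?_
    rw [map_smul, ← hC]
    simp [mul_comm]
  have hpair_a : cpair a (sroot a) = 2 := by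
    rw [← hC, hCdiag]; norm_num
  -- s a is an involution
  have hinv : ∀ v, s a (s a v) = v := by
    intro v
    rw [hs, hs]
    rw [map_sub, map_smul, hpair_a, smul_eq_mul]
    module
  have hsaa : s a (sroot a) = -(sroot a) := by
    rw [hs, hpair_a, two_smul]; abel
  -- coefficients of simple roots
  have hcs : ∀ b, coeff (sroot a) b = if b = a then 1 else 0 := by
    intro b
    have h1 : ∑ c, ((coeff (sroot a) c : ℚ)) • sroot c
        = ∑ c, (if c = a then (1:ℚ) else 0) • sroot c := by
      rw [← hrep (sroot a) (hpossub (hsimple a))]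
      simp [ite_smul]
    have := huniq _ _ h1 b
    split_ifs at this ⊢ with hb <;> exact_mod_cast this
  -- coefficients of negatives
  have hcneg : ∀ γ ∈ Φ, ∀ b, coeff (-γ) b = -coeff γ b := by
    intro γ hγ b
    have h1 : ∑ c, ((coeff (-γ) c : ℚ)) • sroot c = ∑ c, (-(coeff γ c : ℚ)) • sroot c := by
      rw [← hrep (-γ) (hsymm γ hγ)]
      rw [show (-γ : V) = -(∑ c, ((coeff γ c : ℚ)) • sroot c) by rw [← hrep γ hγ]]
      simp [neg_smul, Finset.sum_neg_distrib]
    have := huniq _ _ h1 b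
    exact_mod_cast this
  -- coefficients of s a β
  have hcsb : ∀ β ∈ Φ, ∀ b, ((coeff (s a β) b : ℚ))
      = coeff β b - if b = a then cpair a β else 0 := by
    intro β hβ b
    have hsβ : s a β ∈ Φ := hsΦ a β hβ
    have h1 : ∑ c, ((coeff (s a β) c : ℚ)) • sroot c
        = ∑ c, (((coeff β c : ℚ)) - if c = a then cpair a β else 0) • sroot c := by
      rw [← hrep _ hsβ, hs]
      rw [show (∑ c, (((coeff β c : ℚ)) - if c = a then cpair a β else 0) • sroot c)
          = (∑ c, ((coeff β c : ℚ)) • sroot c)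
            - ∑ c, (if c = a then cpair a β else 0) • sroot c by
        simp [sub_smul, Finset.sum_sub_distrib]]
      rw [← hrep β hβ]
      congr 1
      simp [ite_smul]
    exact huniq _ _ h1 b
  -- the key integer identity for coefficients of s a β at a
  have hkey : ∀ β ∈ Φ, coeff (s a β) a = coeff β a - ∑ b, C a b * coeff β b := by
    intro β hβ
    have h1 := hcsb β hβ a
    rw [if_pos rfl, hcp β hβ] at h1
    exact_mod_cast h1
  -- s a preserves Φpos away from sroot a
  have hstab : ∀ β ∈ Φpos, β ≠ sroot a → s a β ∈ Φpos := by
    intro β hβp hne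
    have hβ : β ∈ Φ := hpossub hβp
    have hsβ : s a β ∈ Φ := hsΦ a β hβ
    rcases hsign _ hsβ with h | h
    · exact h
    · exfalso
      -- coefficients of β away from a all vanish
      have hvanish : ∀ b, b ≠ a → coeff β b = 0 := by
        intro b hb
        have h1 : ((coeff (s a β) b : ℚ)) = coeff β b := by
          rw [hcsb β hβ b, if_neg hb, sub_zero]
        have h2 : coeff (s a β) b = coeff β b := by exact_mod_cast h1
        have h3 : 0 ≤ coeff (-(s a β)) b := hnonneg _ h b
        rw [hcneg _ hsβ b, h2] at h3
        have h4 : 0 ≤ coeff β b := hnonneg β hβp b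
        omega
      have hβeq : β = coeff β a • sroot a := by
        conv_lhs => rw [hcoeff β hβ]
        rw [Finset.sum_eq_single_of_mem a (Finset.mem_univ a)
          (fun b _ hb => by rw [hvanish b hb, zero_smul])]
      have hmem : ((coeff β a : ℚ)) • sroot a ∈ Φ := by
        rw [Int.cast_smul_eq_zsmul, ← hβeq]; exact hβ
      rcases hred (sroot a) (hpossub (hsimple a)) _ hmem with h1 | h1
      · have : coeff β a = 1 := by exact_mod_cast h1
        rw [this, one_smul] at hβeq
        exact hne hβeq
      · have : coeff β a = -1 := by exact_mod_cast h1
        have := hnonneg β hβp a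
        omega
  have hstab' : ∀ β ∈ Φpos, β ≠ sroot a → s a β ≠ sroot a := by
    intro β hβp hne heq
    have : β = -(sroot a) := by
      have := congrArg (s a) heq
      rwa [hinv, hsaa] at this
    have h1 := hnonneg β hβp a
    rw [this, hcneg _ (hpossub (hsimple a)) a, hcs a, if_pos rfl] at h1
    omega
  -- exponent identity
  have hexp : ∀ β ∈ Φpos, β ≠ sroot a →
      (coeff β a).toNat + (coeff (s a β) a).toNat = m a β := by
    intro β hβp hne
    have hβ : β ∈ Φ := hpossub hβp
    have h1 : 0 ≤ coeff β a := hnonneg β hβp a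
    have h2 : 0 ≤ coeff (s a β) a := hnonneg _ (hstab β hβp hne) a
    have hsum : coeff β a + coeff (s a β) a = (m a β : ℤ) := by
      rw [hkey β hβ, hm a β hβp]
      have hsplit := Finset.sum_filter_add_sum_filter_not Finset.univ
        (fun b => C a b < 0) (fun b => C a b * coeff β b)
      have hother : ∑ b ∈ Finset.univ.filter (fun b => ¬ C a b < 0),
          C a b * coeff β b = 2 * coeff β a := by
        rw [Finset.sum_eq_single_of_mem a]
        · rw [hCdiag]
        · simp [hCdiag]
        · intro b hb hba
          simp only [Finset.mem_filter, Finset.mem_univ, true_and, not_lt] at hb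
          have := hCoff a b (Ne.symm hba)
          have : C a b = 0 := le_antisymm this hb
          rw [this, zero_mul]
      omega
    omega
  -- m a (sroot a) = 0
  have hm0 : m a (sroot a) = 0 := by
    have h1 := hm a (sroot a) (hsimple a)
    rw [Finset.sum_eq_zero] at h1
    · omega
    · intro b hb
      simp only [Finset.mem_filter, Finset.mem_univ, true_and] at hb
      have hba : b ≠ a := by
        intro h; rw [h, hCdiag] at hb; omega
      rw [hcs b, if_neg hba, mul_zero]
  have hcsa1 : (coeff (sroot a) a).toNat = 1 := by
    rw [hcs a, if_pos rfl]; rfl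
  -- split off sroot a from all three products
  rw [← Finset.mul_prod_erase Φpos (fun α => (1 - expZ (-α)) ^ (coeff α a).toNat)
        (hsimple a),
      ← Finset.mul_prod_erase Φpos (fun α => (1 - expZ (-(s a α))) ^ (coeff α a).toNat)
        (hsimple a),
      ← Finset.mul_prod_erase Φpos (fun α => (1 - expZ (-α)) ^ (m a α)) (hsimple a)]
  simp only [hcsa1, hm0, hsaa, neg_neg, pow_one, pow_zero]
  -- reindex the reflected product over the erase set
  have hbij : ∏ α ∈ Φpos.erase (sroot a), (1 - expZ (-(s a α))) ^ (coeff α a).toNat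
      = ∏ β ∈ Φpos.erase (sroot a), (1 - expZ (-β)) ^ (coeff (s a β) a).toNat := by
    refine Finset.prod_nbij' (fun α => s a α) (fun β => s a β) ?_ ?_ ?_ ?_ ?_
    · intro α hα
      rw [Finset.mem_erase] at hα ⊢
      exact ⟨hstab' α hα.2 hα.1, hstab α hα.2 hα.1⟩
    · intro β hβ
      rw [Finset.mem_erase] at hβ ⊢
      exact ⟨hstab' β hβ.2 hβ.1, hstab β hβ.2 hβ.1⟩
    · intro α _; exact hinv α
    · intro β _; exact hinv β
    · intro α hα
      rw [hinv]
  rw [hbij]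
  -- combine the two products over the erase set
  have hcomb : (∏ α ∈ Φpos.erase (sroot a), (1 - expZ (-α)) ^ (coeff α a).toNat)
      * ∏ β ∈ Φpos.erase (sroot a), (1 - expZ (-β)) ^ (coeff (s a β) a).toNat
      = ∏ α ∈ Φpos.erase (sroot a), (1 - expZ (-α)) ^ (m a α) := by
    rw [← Finset.prod_mul_distrib]
    refine Finset.prod_congr rfl fun α hα => ?_
    rw [Finset.mem_erase] at hα
    rw [← pow_add, hexp α hα.2 hα.1]
  calc (1 - expZ (-sroot a)) * (∏ α ∈ Φpos.erase (sroot a), (1 - expZ (-α)) ^ (coeff α a).toNat)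
        * ((1 - expZ (sroot a)) * ∏ β ∈ Φpos.erase (sroot a), (1 - expZ (-β)) ^ (coeff (s a β) a).toNat)
      = (1 - expZ (sroot a)) * (1 - expZ (-sroot a))
        * ((∏ α ∈ Φpos.erase (sroot a), (1 - expZ (-α)) ^ (coeff α a).toNat)
          * ∏ β ∈ Φpos.erase (sroot a), (1 - expZ (-β)) ^ (coeff (s a β) a).toNat) := by
        ring
    _ = (1 - expZ (sroot a)) * (1 - expZ (-sroot a))
        * (1 * ∏ α ∈ Φpos.erase (sroot a), (1 - expZ (-α)) ^ (m a α)) := by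
        rw [hcomb, one_mul]
end

section
/- Let a ∈ I and let Π ⊆ P be a saturated set of weights with highest weight the fundamental weight ω_a. Then every λ ∈ Π with λ ≠ ω_a satisfies λ ⪯ ω_a − α_a = s_a(ω_a); that is, ω_a − α_a − λ is a nonnegative integer combination of the simple roots. (In particular, every weight λ ≠ ω_a of the irreducible highest-weight representation L(ω_a) of a complex simple Lie algebra satisfies s_a(ω_a) ⪰ λ.) -/
/-!
STATEMENT 7.  Let `a ∈ I` and let `S ⊆ P` be a saturated set of weights with highest
weight the fundamental weight `ω = ω_a`.  Then every `λ ∈ S` with `λ ≠ ω` satisfies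
`λ ⪯ ω - α_a = s_a(ω)`, i.e. `ω - α_a - λ` is a nonnegative integer combination of the
simple roots.

Here the coroot pairing is expressed through a `W`-compatible inner product `B` (induced
by the Killing form): `⟨λ, α^∨⟩ = 2 (λ, α)/(α, α)`, recorded by the data `pairD` with
`pairD λ α * (α, α) = 2 (λ, α)`.  `S` is saturated when, for all `λ ∈ S`, `α ∈ Φ` and
integers `i` between `0` and `⟨λ, α^∨⟩` (inclusive), `λ - i•α ∈ S`; `S` has highest weight
`μ` when `μ ∈ S` and `λ ⪯ μ` for all `λ ∈ S`.
-/
theorem saturated_set_highest_weight_fundamental_le_sub_simple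
    {I V : Type*} [Fintype I] [DecidableEq I]
    [AddCommGroup V] [Module ℚ V] [FiniteDimensional ℚ V]
    (Φ : Finset V)                  -- the roots
    (sroot : I → V)                 -- the simple roots
    (B : V →ₗ[ℚ] V →ₗ[ℚ] ℚ)         -- inner product induced by the Killing form
    (hBsymm : ∀ x y, B x y = B y x)
    (hBpos : ∀ x : V, x ≠ 0 → 0 < B x x)
    (hindep : LinearIndependent ℚ sroot)
    (hzero : (0 : V) ∉ Φ)
    (hsimple : ∀ b, sroot b ∈ Φ)
    -- the coroot pairing `pairD λ α = ⟨λ, α^∨⟩ = 2(λ,α)/(α,α)`: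
    (pairD : V → V → ℚ)
    (hpair : ∀ lam alf, pairD lam alf * B alf alf = 2 * B lam alf)
    -- `S` is a saturated set of weights:
    (S : Set V)
    (hSP : ∀ lam ∈ S, ∀ alf ∈ Φ, ∃ n : ℤ, pairD lam alf = n)   -- `S ⊆ P`
    (hsat : ∀ lam ∈ S, ∀ alf ∈ Φ, ∀ i : ℤ,
        ((0 ≤ (i : ℚ) ∧ (i : ℚ) ≤ pairD lam alf) ∨
         (pairD lam alf ≤ (i : ℚ) ∧ (i : ℚ) ≤ 0)) →
        lam - (i : ℚ) • alf ∈ S)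
    -- the fundamental weight `ω = ω_a`:
    (a : I) (ω : V) (hω : ∀ b, pairD ω (sroot b) = if b = a then 1 else 0)
    -- `S` has highest weight `ω`:
    (hωS : ω ∈ S)
    (hhw : ∀ lam ∈ S, ∃ k : I → ℕ, ω - lam = ∑ b, (k b : ℚ) • sroot b) :
    ∀ lam ∈ S, lam ≠ ω →
      ∃ k : I → ℕ, (ω - sroot a) - lam = ∑ b, (k b : ℚ) • sroot b := by
  have hBne : ∀ α ∈ Φ, B α α ≠ 0 := fun α hα =>
    ne_of_gt (hBpos α (fun h => hzero (h ▸ hα)))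
  have hlin := Fintype.linearIndependent_iff.mp hindep
  have hP : ∀ x α, α ∈ Φ → pairD x α = 2 * B x α / B α α := fun x α hα => by
    rw [eq_div_iff (hBne α hα)]; exact hpair x α
  have hsub : ∀ x y α, α ∈ Φ → pairD (x - y) α = pairD x α - pairD y α := by
    intro x y α hα
    rw [hP _ _ hα, hP _ _ hα, hP _ _ hα, map_sub, LinearMap.sub_apply]
    ring
  have hself : ∀ α ∈ Φ, pairD α α = 2 := by
    intro α hα
    rw [hP _ _ hα, mul_div_assoc, div_self (hBne α hα), mul_one]
  -- subtracting one simple root from a nonnegative combination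
  have hsubsum : ∀ (k : I → ℕ) (b : I), 1 ≤ k b →
      (∑ c, (k c : ℚ) • sroot c) - sroot b
        = ∑ c, ((k c - if c = b then 1 else 0 : ℕ) : ℚ) • sroot c := by
    intro k b hkb
    have hcast : ∀ c, ((k c - if c = b then 1 else 0 : ℕ) : ℚ)
        = (k c : ℚ) - (if c = b then 1 else 0 : ℚ) := by
      intro c
      by_cases h : c = b
      · subst h
        rw [if_pos rfl, if_pos rfl, Nat.cast_sub hkb]; norm_num
      · simp [h]
    simp only [hcast, sub_smul, Finset.sum_sub_distrib]
    congr 1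
    simp [ite_smul]
  -- main claim: the coefficient of α_a is at least 1
  have key : ∀ n : ℕ, ∀ lam ∈ S, lam ≠ ω → ∀ k : I → ℕ,
      ω - lam = ∑ c, (k c : ℚ) • sroot c → ∑ c, k c = n → 1 ≤ k a := by
    intro n
    induction n using Nat.strong_induction_on with
    | _ n IH =>
      intro lam hlam hne k hk hsum
      by_contra hka
      have hka0 : k a = 0 := Nat.lt_one_iff.mp (not_le.mp hka)
      have hβne : ω - lam ≠ 0 := sub_ne_zero.mpr (Ne.symm hne)
      have hpos : 0 < B (ω - lam) (ω - lam) := hBpos _ hβne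
      have hexp : B (ω - lam) (ω - lam)
          = ∑ c, (k c : ℚ) * B (ω - lam) (sroot c) := by
        conv_lhs => rw [show (B (ω - lam)) (ω - lam)
          = (B (ω - lam)) (∑ c, (k c : ℚ) • sroot c) by rw [← hk]]
        simp [map_sum, map_smul]
      obtain ⟨b, hb⟩ : ∃ b, 0 < (k b : ℚ) * B (ω - lam) (sroot b) := by
        by_contra h
        push_neg at h
        have : B (ω - lam) (ω - lam) ≤ 0 := by
          rw [hexp]; exact Finset.sum_nonpos (fun c _ => h c)
        linarith
      have hkb : 1 ≤ k b := by
        rcases Nat.eq_zero_or_pos (k b) with h | h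
        · rw [h] at hb; simp at hb
        · exact h
      have hBb : 0 < B (ω - lam) (sroot b) := by
        by_contra h
        push_neg at h
        nlinarith [(by positivity : (0:ℚ) ≤ (k b:ℚ))]
      have hbna : b ≠ a := fun h => by rw [h, hka0] at hkb; omega
      have hpairβ : 0 < pairD (ω - lam) (sroot b) := by
        rw [hP _ _ (hsimple b)]
        have := hBpos (sroot b) (fun h => hzero (h ▸ hsimple b))
        positivity
      have hω0 : pairD ω (sroot b) = 0 := by rw [hω b, if_neg hbna]
      have hpairlam : pairD lam (sroot b) < 0 := by
        have h := hsub ω lam (sroot b) (hsimple b)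
        rw [hω0] at h
        linarith
      obtain ⟨m, hm⟩ := hSP lam hlam (sroot b) (hsimple b)
      have hm1 : (m : ℚ) ≤ -1 := by
        have h0 : (m : ℚ) < 0 := hm ▸ hpairlam
        have : m < 0 := by exact_mod_cast h0
        have : m ≤ -1 := by omega
        exact_mod_cast this
      have hlS : lam + sroot b ∈ S := by
        have h := hsat lam hlam (sroot b) (hsimple b) (-1)
          (Or.inr ⟨by rw [hm]; push_cast; linarith, by norm_num⟩)
        have e : lam - ((-1 : ℤ) : ℚ) • sroot b = lam + sroot b := by
          push_cast; module
        rwa [e] at h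
      by_cases hol : lam + sroot b = ω
      · -- then lam = ω - α_b, pairing is -2, saturate to get ω + α_b ∈ S: contradiction
        have hlamω : lam = ω - sroot b := by
          rw [← hol]; abel
        have hp2 : pairD lam (sroot b) = -2 := by
          rw [hlamω, hsub _ _ _ (hsimple b), hω0, hself _ (hsimple b)]
          norm_num
        have hS2 := hsat lam hlam (sroot b) (hsimple b) (-2)
          (Or.inr ⟨by rw [hp2]; norm_num, by norm_num⟩)
        have e : lam - ((-2 : ℤ) : ℚ) • sroot b = ω + sroot b := by
          rw [hlamω]; push_cast; module
        rw [e] at hS2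
        obtain ⟨m2, hm2⟩ := hhw _ hS2
        have hz : ∑ c, ((m2 c : ℚ) + (if c = b then 1 else 0)) • sroot c = 0 := by
          have : ω - (ω + sroot b) = -sroot b := by abel
          rw [this] at hm2
          have hb' : sroot b = ∑ c, (if c = b then (1:ℚ) else 0) • sroot c := by simp
          simp only [add_smul, Finset.sum_add_distrib, ← hb', ← hm2]
          abel
        have := hlin _ hz b
        simp at this
        have : (0:ℚ) ≤ (m2 b : ℚ) := Nat.cast_nonneg _
        linarith [hlin _ hz b, this]
      · -- induction step
        set k' : I → ℕ := fun c => k c - if c = b then 1 else 0 with hk'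
        have hk'eq : ω - (lam + sroot b) = ∑ c, (k' c : ℚ) • sroot c := by
          have h1 : ω - (lam + sroot b) = (∑ c, (k c : ℚ) • sroot c) - sroot b := by
            rw [← hk]; abel
          rw [h1, hsubsum k b hkb]
        have hlt : ∑ c, k' c < n := by
          rw [← hsum]
          refine Finset.sum_lt_sum (fun c _ => Nat.sub_le _ _) ⟨b, Finset.mem_univ b, ?_⟩
          simp only [hk', if_pos rfl, eq_self_iff_true, if_true]
          omega
        have h1 := IH _ hlt _ hlS hol k' hk'eq rfl
        simp only [hk', if_neg (fun h : a = b => hbna h.symm)] at h1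
        omega
  -- conclude
  intro lam hlam hne
  obtain ⟨k, hk⟩ := hhw lam hlam
  have hka := key (∑ c, k c) lam hlam hne k hk rfl
  refine ⟨fun c => k c - if c = a then 1 else 0, ?_⟩
  have h1 : (ω - sroot a) - lam = (∑ c, (k c : ℚ) • sroot c) - sroot a := by
    rw [← hk]; abel
  rw [h1, hsubsum k a hka]
end
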